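/- Let $n \ge 2$ and let $W \subset \mathbb{C}^{2n-1}$ be the set of $2n$ vectors consisting of the standard basis vectors $e_1,\dots,e_{2n-1}$ together with the all-ones vector $u=(1,\dots,1)$. Let $Q$ be a homogeneous polynomial of degree $n$ in $2n-1$ variables over $\mathbb{C}$ that vanishes with multiplicity at least $n-1$ at every point of $W$. Then for every subset $S \subseteq W$ of cardinality $n-1$, the polynomial $Q$ vanishes identically on the linear span of $S$. -/

import Mathlib

/-- A polynomial `Q ∈ ℂ[x_1, …, x_N]` vanishes with multiplicity at least `y` at a
point `p ∈ ℂ^N` if every iterated partial derivative of `Q` of total order at most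
`y - 1` (equivalently, of total order `< y`) evaluates to `0` at `p`. -/
def VanishesToOrder {σ : Type*} (Q : MvPolynomial σ ℂ) (p : σ → ℂ) (y : ℕ) : Prop :=
  ∀ L : List σ, L.length < y →
    MvPolynomial.eval p (L.foldr (fun i q => MvPolynomial.pderiv i q) Q) = 0

/-- The set `W ⊂ ℂ^(2n-1)` consisting of the `2n - 1` standard basis vectors together
with the all-ones vector. -/
def Wset (n : ℕ) : Set (Fin (2 * n - 1) → ℂ) :=
  {p | (∃ i, p = Pi.single i 1) ∨ p = fun _ => 1}


open MvPolynomial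

section Helpers

variable {σ τ : Type*} [Fintype σ] [DecidableEq σ] [DecidableEq τ]

lemma pderiv_aeval_chain (g : σ → MvPolynomial τ ℂ) (j : τ) (Q : MvPolynomial σ ℂ) :
    pderiv j ((aeval g) Q) = ∑ i, (aeval g) (pderiv i Q) * pderiv j (g i) := by
  induction Q using MvPolynomial.induction_on with
  | C a => simp
  | add p q hp hq =>
      rw [map_add, map_add, hp, hq, ← Finset.sum_add_distrib]
      exact Finset.sum_congr rfl fun i _ => by rw [map_add, map_add, add_mul]
  | mul_X p i hp =>
      simp only [map_mul, aeval_X, pderiv_mul, hp, pderiv_X, map_add, add_mul,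
        Finset.sum_add_distrib, Finset.sum_mul]
      refine congrArg₂ (· + ·) ?_ ?_
      · rw [Finset.sum_congr rfl]
        intros; ring
      · rw [Finset.sum_eq_single i]
        · simp
        · intro k _ hk; simp [Pi.single_eq_of_ne' hk]
        · simp

lemma foldr_pderiv_aeval_mem_span (g : σ → MvPolynomial τ ℂ)
    (hg : ∀ i j, ∃ c : ℂ, pderiv j (g i) = C c) (Q : MvPolynomial σ ℂ) :
    ∀ L : List τ, L.foldr (fun i q => pderiv i q) ((aeval g) Q) ∈
      Submodule.span ℂ ((fun M : List σ => (aeval g) (M.foldr (fun i q => pderiv i q) Q)) ''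
        {M | M.length = L.length}) := by
  intro L
  induction L with
  | nil => exact Submodule.subset_span ⟨[], rfl, rfl⟩
  | cons j L ih =>
      have h1 : (j :: L).foldr (fun i q => pderiv i q) ((aeval g) Q)
          = pderiv j (L.foldr (fun i q => pderiv i q) ((aeval g) Q)) := rfl
      rw [h1]
      have h2 := Submodule.apply_mem_span_image_of_mem_span
        (pderiv (R := ℂ) j).toLinearMap ih
      refine Submodule.span_le.mpr ?_ h2
      rintro _ ⟨_, ⟨M, hM, rfl⟩, rfl⟩
      simp only [LinearMap.coe_mk]
      have : (pderiv (R := ℂ) j).toLinearMap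
          ((aeval g) (M.foldr (fun i q => pderiv i q) Q))
          = ∑ i, (aeval g) ((i :: M).foldr (fun i q => pderiv i q) Q) * pderiv j (g i) :=
        pderiv_aeval_chain g j _
      rw [this]
      refine Submodule.sum_mem _ fun i _ => ?_
      obtain ⟨c, hc⟩ := hg i j
      rw [hc, mul_comm, C_mul']
      exact Submodule.smul_mem _ _ (Submodule.subset_span
        ⟨i :: M, by simpa using hM, rfl⟩)

lemma foldr_pderiv_monomial (L : List σ) (γ : σ →₀ ℕ) (a : ℂ) :
    L.foldr (fun i q => pderiv i q) (monomial γ a) =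
      monomial (γ - Multiset.toFinsupp (↑L : Multiset σ))
        (a * ∏ i : σ, ((γ i).descFactorial (L.count i) : ℂ)) := by
  induction L with
  | nil => simp
  | cons j L ih =>
      have h1 : (j :: L).foldr (fun i q => pderiv i q) (monomial γ a)
          = pderiv j (L.foldr (fun i q => pderiv i q) (monomial γ a)) := rfl
      rw [h1, ih, pderiv_monomial]
      have hexp : γ - Multiset.toFinsupp (↑L : Multiset σ) - Finsupp.single j 1
          = γ - Multiset.toFinsupp (↑(j :: L) : Multiset σ) := by
        ext i
        simp only [Finsupp.tsub_apply, Multiset.toFinsupp_apply, Finsupp.single_apply,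
          Multiset.coe_count, List.count_cons]
        by_cases h : i = j <;> simp [h] <;> omega
      rw [hexp]
      congr 1
      have hγj : (γ - Multiset.toFinsupp (↑L : Multiset σ)) j = γ j - L.count j := by
        simp [Finsupp.tsub_apply, Multiset.toFinsupp_apply, Multiset.coe_count]
      rw [hγj]
      rw [← Finset.mul_prod_erase Finset.univ _ (Finset.mem_univ j),
        ← Finset.mul_prod_erase Finset.univ
          (fun i => ((γ i).descFactorial ((j :: L).count i) : ℂ)) (Finset.mem_univ j)]
      have hprod : ∏ i ∈ Finset.univ.erase j, ((γ i).descFactorial (L.count i) : ℂ)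
          = ∏ i ∈ Finset.univ.erase j, ((γ i).descFactorial ((j :: L).count i) : ℂ) := by
        refine Finset.prod_congr rfl fun i hi => ?_
        rw [List.count_cons_of_ne (Finset.ne_of_mem_erase hi).symm]
      have hcnt : (j :: L).count j = L.count j + 1 := List.count_cons_self
      rw [hprod, hcnt, Nat.descFactorial_succ]
      push_cast
      ring

lemma foldr_pderiv_sum {ι : Type*} (s : Finset ι) (f : ι → MvPolynomial σ ℂ) (L : List σ) :
    L.foldr (fun i q => pderiv i q) (∑ x ∈ s, f x)
      = ∑ x ∈ s, L.foldr (fun i q => pderiv i q) (f x) := by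
  induction L with
  | nil => rfl
  | cons j L ih =>
      have h1 : ∀ p : MvPolynomial σ ℂ, (j :: L).foldr (fun i q => pderiv i q) p
          = pderiv j (L.foldr (fun i q => pderiv i q) p) := fun _ => rfl
      simp only [h1, ih, map_sum]

lemma eval_single_monomial (j : σ) (δ : σ →₀ ℕ) (b : ℂ) :
    eval (Pi.single j (1:ℂ)) (monomial δ b)
      = if δ.support ⊆ {j} then b else 0 := by
  rw [eval_monomial]
  split_ifs with h
  · have : (δ.prod fun n e => (Pi.single j (1:ℂ) : σ → ℂ) n ^ e) = 1 := by
      refine Finset.prod_eq_one fun i hi => ?_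
      have : i = j := Finset.mem_singleton.mp (h hi)
      subst this; simp
    rw [this, mul_one]
  · obtain ⟨i, hi, hij⟩ : ∃ i ∈ δ.support, i ≠ j := by
      by_contra hc
      push_neg at hc
      exact h fun i hi => Finset.mem_singleton.mpr (hc i hi)
    have : (δ.prod fun n e => (Pi.single j (1:ℂ) : σ → ℂ) n ^ e) = 0 := by
      refine Finset.prod_eq_zero hi ?_
      simp only [Pi.single_eq_of_ne hij]
      exact zero_pow (Finsupp.mem_support_iff.mp hi)
    rw [this, mul_zero]

lemma homog_vanish_eq_zero (n : ℕ) (R : MvPolynomial σ ℂ) (hcard : Fintype.card σ < n)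
    (hR : R.IsHomogeneous n)
    (hvan : ∀ j : σ, VanishesToOrder R (Pi.single j 1) (n - 1)) : R = 0 := by
  have degsum : ∀ γ : σ →₀ ℕ, γ.degree = ∑ i : σ, γ i := fun γ =>
    Finset.sum_subset (Finset.subset_univ _) fun i _ hi => Finsupp.notMem_support_iff.mp hi
  ext α
  rw [coeff_zero]
  by_contra hα
  have hdeg : α.degree = n := by
    by_contra h; exact hα (hR.coeff_eq_zero h)
  have hdegsum : ∑ i : σ, α i = n := by rw [← degsum]; exact hdeg
  obtain ⟨j, hj2⟩ : ∃ j, 2 ≤ α j := by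
    by_contra hc
    push_neg at hc
    have : ∑ i : σ, α i ≤ ∑ _i : σ, 1 :=
      Finset.sum_le_sum fun i _ => Nat.lt_succ_iff.mp (hc i)
    simp only [Finset.sum_const, smul_eq_mul, mul_one, Finset.card_univ] at this
    omega
  have hjn : α j ≤ n := hdegsum ▸ Finset.single_le_sum (fun i _ => Nat.zero_le _) (Finset.mem_univ j)
  set β := α.erase j with hβ
  have hβj : β j = 0 := Finsupp.erase_same
  have hβne : ∀ i, i ≠ j → β i = α i := fun i hi => Finsupp.erase_ne hi
  have hβsum : ∑ i : σ, β i = n - α j := by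
    have h1 : ∑ i : σ, α i = α j + ∑ i ∈ Finset.univ.erase j, α i :=
      (Finset.add_sum_erase _ _ (Finset.mem_univ j)).symm
    have h2 : ∑ i : σ, β i = β j + ∑ i ∈ Finset.univ.erase j, β i :=
      (Finset.add_sum_erase _ _ (Finset.mem_univ j)).symm
    have h3 : ∑ i ∈ Finset.univ.erase j, β i = ∑ i ∈ Finset.univ.erase j, α i :=
      Finset.sum_congr rfl fun i hi => hβne i (Finset.ne_of_mem_erase hi)
    omega
  set L := β.toMultiset.toList with hL
  have hcount : ∀ i, L.count i = β i := by
    intro i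
    rw [← Multiset.coe_count, hL, Multiset.coe_toList, Finsupp.count_toMultiset]
  have hF : Multiset.toFinsupp (↑L : Multiset σ) = β := by
    ext i
    rw [Multiset.toFinsupp_apply, Multiset.coe_count, hcount]
  have hlen : L.length = n - α j := by
    rw [hL, Multiset.length_toList, Finsupp.card_toMultiset,
      Finsupp.sum_fintype _ _ fun i => rfl]
    exact hβsum
  have hlt : L.length < n - 1 := by omega
  have h0 : ∑ γ ∈ R.support,
      (if (γ - β).support ⊆ {j} then
        MvPolynomial.coeff γ R * ∏ i : σ, ((γ i).descFactorial (β i) : ℂ) else 0) = 0 := by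
    have hv0 := hvan j L hlt
    rw [as_sum R, foldr_pderiv_sum, map_sum] at hv0
    have heq : ∑ γ ∈ R.support, eval (Pi.single j (1:ℂ))
          (List.foldr (fun i q => pderiv i q) (monomial γ (coeff γ R)) L)
        = ∑ γ ∈ R.support, (if (γ - β).support ⊆ {j} then
            coeff γ R * ∏ i : σ, ((γ i).descFactorial (β i) : ℂ) else 0) := by
      refine Finset.sum_congr rfl fun γ _ => ?_
      rw [foldr_pderiv_monomial, eval_single_monomial, hF]
      simp only [hcount]
    rw [heq] at hv0
    exact hv0
  have hmem : α ∈ R.support := MvPolynomial.mem_support_iff.mpr hα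
  rw [Finset.sum_eq_single_of_mem α hmem ?other] at h0
  case other =>
    intro γ hγ hγα
    split_ifs with hsupp
    · by_cases hle : ∀ i, β i ≤ γ i
      · exfalso
        apply hγα
        have hγeq : ∀ i, i ≠ j → γ i = α i := by
          intro i hij
          have h1 : (γ - β) i = 0 := by
            by_contra h
            have := hsupp (Finsupp.mem_support_iff.mpr h)
            exact hij (Finset.mem_singleton.mp this)
          rw [Finsupp.tsub_apply] at h1
          have := hle i
          have := hβne i hij
          omega
        have hγdeg : ∑ i : σ, γ i = n := by
          rw [← degsum]
          by_contra h
          exact MvPolynomial.mem_support_iff.mp hγ (hR.coeff_eq_zero h)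
        have h1 : ∑ i : σ, γ i = γ j + ∑ i ∈ Finset.univ.erase j, γ i :=
          (Finset.add_sum_erase _ _ (Finset.mem_univ j)).symm
        have h2 : ∑ i : σ, α i = α j + ∑ i ∈ Finset.univ.erase j, α i :=
          (Finset.add_sum_erase _ _ (Finset.mem_univ j)).symm
        have h3 : ∑ i ∈ Finset.univ.erase j, γ i = ∑ i ∈ Finset.univ.erase j, α i :=
          Finset.sum_congr rfl fun i hi => hγeq i (Finset.ne_of_mem_erase hi)
        have hγj : γ j = α j := by omega
        ext i
        by_cases hij : i = j
        · rw [hij]; exact hγj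
        · exact hγeq i hij
      · push_neg at hle
        obtain ⟨i, hi⟩ := hle
        have : ((γ i).descFactorial (β i) : ℂ) = 0 := by
          rw [Nat.descFactorial_of_lt hi]; exact Nat.cast_zero
        rw [Finset.prod_eq_zero (Finset.mem_univ i) this, mul_zero]
    · rfl
  rw [if_pos ?pos] at h0
  case pos =>
    intro i hi
    rw [Finset.mem_singleton]
    by_contra hij
    have h1 : (α - β) i = 0 := by
      rw [Finsupp.tsub_apply, hβne i hij, Nat.sub_self]
    exact Finsupp.mem_support_iff.mp hi h1
  have hprod : (∏ i : σ, ((α i).descFactorial (β i) : ℂ)) ≠ 0 := by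
    rw [Finset.prod_ne_zero_iff]
    intro i _
    rw [Nat.cast_ne_zero, Ne, Nat.descFactorial_eq_zero_iff_lt, not_lt]
    by_cases hij : i = j
    · rw [hij, hβj]; exact Nat.zero_le _
    · rw [hβne i hij]
  exact hα ((mul_eq_zero.mp h0).resolve_right hprod)

lemma eval_eq_aeval' (c : τ → ℂ) (q : MvPolynomial τ ℂ) : eval c q = aeval c q := by
  rw [← coe_aeval_eq_eval]; rfl

lemma eval_aeval' (c : τ → ℂ) (g : σ → MvPolynomial τ ℂ) (Q : MvPolynomial σ ℂ) :
    eval c ((aeval g) Q) = eval (fun i => eval c (g i)) Q := by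
  rw [eval_eq_aeval', comp_aeval_apply (f := g) (aeval c) Q]
  simp only [← eval_eq_aeval']
end Helpers

/-- Let `n ≥ 2` and let `W ⊂ ℂ^(2n-1)` consist of the standard basis vectors together
with the all-ones vector (`2n` vectors).  If a homogeneous polynomial `Q` of degree
`n` in `2n - 1` variables vanishes with multiplicity at least `n - 1` at every point
of `W`, then for every subset `S ⊆ W` of cardinality `n - 1`, the polynomial `Q`
vanishes identically on the linear span of `S`. -/
theorem stmt8 (n : ℕ) (hn : 2 ≤ n)
    (Q : MvPolynomial (Fin (2 * n - 1)) ℂ) (hQ : Q.IsHomogeneous n)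
    (hv : ∀ p ∈ Wset n, VanishesToOrder Q p (n - 1))
    (S : Finset (Fin (2 * n - 1) → ℂ)) (hSW : ↑S ⊆ Wset n)
    (hS : S.card = n - 1) :
    ∀ p ∈ Submodule.span ℂ (S : Set (Fin (2 * n - 1) → ℂ)),
      MvPolynomial.eval p Q = 0 := by
  intro x hx
  classical
  let e : S ≃ Fin (n - 1) := S.equivFinOfCardEq hS
  set p : Fin (n - 1) → (Fin (2 * n - 1) → ℂ) := fun j => (e.symm j : Fin (2 * n - 1) → ℂ)
    with hp
  have hrange : Set.range p = (S : Set (Fin (2 * n - 1) → ℂ)) := by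
    ext y; constructor
    · rintro ⟨j, rfl⟩; exact (e.symm j).2
    · intro hyS; exact ⟨e ⟨y, hyS⟩, by simp [hp]⟩
  rw [← hrange] at hx
  obtain ⟨c, rfl⟩ := (Submodule.mem_span_range_iff_exists_fun ℂ).mp hx
  set g : Fin (2 * n - 1) → MvPolynomial (Fin (n - 1)) ℂ :=
    fun i => ∑ j, C (p j i) * X j with hg
  have hgh : ∀ i, (g i).IsHomogeneous 1 := by
    intro i
    exact IsHomogeneous.sum _ _ _ fun j _ => (isHomogeneous_X ℂ j).C_mul _
  have hRhom : ((aeval g) Q).IsHomogeneous n := by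
    have := hQ.aeval g hgh
    rwa [one_mul] at this
  have hpd : ∀ i j, ∃ d : ℂ, pderiv j (g i) = C d := by
    intro i j
    refine ⟨p j i, ?_⟩
    rw [hg]
    rw [map_sum]
    rw [Finset.sum_eq_single j]
    · rw [pderiv_C_mul, pderiv_X_self, mul_one]
    · intro k _ hk
      rw [pderiv_C_mul, pderiv_X_of_ne hk, mul_zero]
    · simp
  have hgeval : ∀ j : Fin (n - 1),
      (fun i => eval (Pi.single j (1:ℂ)) (g i)) = p j := by
    intro j
    funext i
    rw [hg]
    simp only [map_sum, map_mul, eval_C, eval_X]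
    rw [Finset.sum_eq_single j]
    · simp
    · intro k _ hk
      rw [Pi.single_eq_of_ne hk, mul_zero]
    · simp
  have hvanR : ∀ j : Fin (n - 1),
      VanishesToOrder ((aeval g) Q) (Pi.single j 1) (n - 1) := by
    intro j L hL
    have hmem := foldr_pderiv_aeval_mem_span g hpd Q L
    refine Submodule.span_induction ?_ ?_ ?_ ?_ hmem
    · rintro _ ⟨M, hM, rfl⟩
      rw [eval_aeval', hgeval j]
      exact hv (p j) (hSW (e.symm j).2) M (by rw [Set.mem_setOf_eq] at hM; omega)
    · exact map_zero _
    · intro a b _ _ ha hb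
      rw [map_add, ha, hb, add_zero]
    · intro a q _ hq
      rw [smul_eq_C_mul, map_mul, hq, mul_zero]
  have hR0 : (aeval g) Q = 0 :=
    homog_vanish_eq_zero n ((aeval g) Q) (by simpa using by omega) hRhom hvanR
  have hkey : eval (∑ j, c j • p j) Q = eval c ((aeval g) Q) := by
    rw [eval_aeval']
    have hpt : (fun i => eval c (g i)) = ∑ j, c j • p j := by
      funext i
      rw [hg]
      simp only [map_sum, map_mul, eval_C, eval_X, Finset.sum_apply, Pi.smul_apply,
        smul_eq_mul]
      exact Finset.sum_congr rfl fun j _ => mul_comm _ _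
    rw [hpt]
  rw [hkey, hR0, map_zero]
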